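/- Let G be a finite simple graph with edge-connectivity λ, let k ≥ 4, and let X₁, …, X_k be nonempty sets partitioning V(G) such that for every cyclically consecutive run X_i ∪ X_{i+1} ∪ … ∪ X_j (indices mod k) that is a nonempty proper subset of V(G), this union X has d(X) = λ. Then d(X_i, X_{i+1 mod k}) = λ/2 for every i, and d(X_i, X_j) = 0 whenever X_i and X_j are not cyclically adjacent (i.e., j ≢ i ± 1 mod k). -/

import Mathlib

open scoped Classical

/-- `d(X)`: the number of edges of `G` with exactly one endpoint in `X`.
Each crossing edge `uv` (with `u ∈ X`, `v ∉ X`) is counted once, as the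
ordered pair `(u, v)`. -/
noncomputable def cutSize {V : Type*} [Fintype V] (G : SimpleGraph V)
    (X : Finset V) : ℕ :=
  (Finset.univ.filter fun p : V × V => p.1 ∈ X ∧ p.2 ∉ X ∧ G.Adj p.1 p.2).card

/-- `lam` is the edge-connectivity of `G`: the minimum of `d(X)` over all
`∅ ≠ X ⊊ V`. -/
def IsEdgeConn {V : Type*} [Fintype V] (G : SimpleGraph V) (lam : ℕ) : Prop :=
  (∀ X : Finset V, X.Nonempty → X ≠ Finset.univ → lam ≤ cutSize G X) ∧
  ∃ X : Finset V, X.Nonempty ∧ X ≠ Finset.univ ∧ cutSize G X = lam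

/-- `X` is a min-cut of `G` (whose edge-connectivity is `lam`). -/
def IsMinCut {V : Type*} [Fintype V] (G : SimpleGraph V) (lam : ℕ)
    (X : Finset V) : Prop :=
  X.Nonempty ∧ X ≠ Finset.univ ∧ cutSize G X = lam

/-- `X` is a non-trivial min-cut: a min-cut with `2 ≤ |X| ≤ |V| - 2`. -/
def IsNontrivialMinCut {V : Type*} [Fintype V] (G : SimpleGraph V) (lam : ℕ)
    (X : Finset V) : Prop :=
  IsMinCut G lam X ∧ 2 ≤ X.card ∧ X.card ≤ Fintype.card V - 2

/-- `d(X,Y)`: for disjoint `X`, `Y`, the number of edges of `G` with one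
endpoint in `X` and one endpoint in `Y`. -/
noncomputable def crossCount {V : Type*} [Fintype V] (G : SimpleGraph V)
    (X Y : Finset V) : ℕ :=
  (Finset.univ.filter fun p : V × V => p.1 ∈ X ∧ p.2 ∈ Y ∧ G.Adj p.1 p.2).card

section Aux
variable {V : Type*} [Fintype V] (G : SimpleGraph V)

lemma crossCount_comm (A B : Finset V) : crossCount G A B = crossCount G B A := by
  unfold crossCount
  refine Finset.card_bij' (fun p _ => (p.2, p.1)) (fun p _ => (p.2, p.1)) ?_ ?_ ?_ ?_ <;>
    simp +contextual [SimpleGraph.adj_comm, and_comm]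

lemma crossCount_union_right (A B C : Finset V) (h : Disjoint B C) :
    crossCount G A (B ∪ C) = crossCount G A B + crossCount G A C := by
  unfold crossCount
  rw [← Finset.card_union_of_disjoint]
  · congr 1; ext p
    simp only [Finset.mem_filter, Finset.mem_union]
    tauto
  · rw [Finset.disjoint_left]
    intro p hp hp'
    simp only [Finset.mem_filter] at hp hp'
    exact Finset.disjoint_left.mp h hp.2.2.1 hp'.2.2.1

lemma crossCount_union_left (A B C : Finset V) (h : Disjoint A B) :
    crossCount G (A ∪ B) C = crossCount G A C + crossCount G B C := by
  rw [crossCount_comm, crossCount_union_right G C A B h, crossCount_comm,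
    crossCount_comm G C B]

lemma cutSize_eq_crossCount (A : Finset V) : cutSize G A = crossCount G A Aᶜ := by
  unfold cutSize crossCount
  congr 1; ext p; simp

lemma cutSize_union (A B : Finset V) (h : Disjoint A B) :
    cutSize G A + cutSize G B = cutSize G (A ∪ B) + 2 * crossCount G A B := by
  have hA : Aᶜ = B ∪ (A ∪ B)ᶜ := by
    ext v
    simp only [Finset.mem_compl, Finset.mem_union]
    have : v ∈ A → v ∉ B := fun hv hv' => Finset.disjoint_left.mp h hv hv'
    tauto
  have hB : Bᶜ = A ∪ (A ∪ B)ᶜ := by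
    ext v
    simp only [Finset.mem_compl, Finset.mem_union]
    have : v ∈ A → v ∉ B := fun hv hv' => Finset.disjoint_left.mp h hv hv'
    tauto
  have hd1 : Disjoint B ((A ∪ B)ᶜ : Finset V) := by
    rw [Finset.disjoint_left]
    intro a ha ha'
    simp only [Finset.mem_compl, Finset.mem_union] at ha'
    exact ha' (Or.inr ha)
  have hd2 : Disjoint A ((A ∪ B)ᶜ : Finset V) := by
    rw [Finset.disjoint_left]
    intro a ha ha'
    simp only [Finset.mem_compl, Finset.mem_union] at ha'
    exact ha' (Or.inl ha)
  rw [cutSize_eq_crossCount, cutSize_eq_crossCount, cutSize_eq_crossCount, hA, hB,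
    crossCount_union_right G A B _ hd1, crossCount_union_right G B A _ hd2,
    crossCount_union_left G A B _ h, crossCount_comm G B A]
  ring

lemma crossCount_empty_left (B : Finset V) : crossCount G ∅ B = 0 := by
  simp [crossCount]

end Aux

/-- Let `G` be a finite simple graph with edge-connectivity
`λ`, let `k ≥ 4`, and let `X₀, …, X_{k-1}` (indexed by `ZMod k`) be nonempty
sets partitioning `V(G)` such that every cyclically consecutive run
`X_i ∪ X_{i+1} ∪ … ∪ X_{i+l-1}` (for `1 ≤ l < k`, hence a nonempty proper
subset of `V(G)`) has `d = λ`. Then `d(X_i, X_{i+1}) = λ/2` for every `i`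
(stated as `2·d(X_i, X_{i+1}) = λ`), and `d(X_i, X_j) = 0` whenever `X_i` and
`X_j` are not cyclically adjacent. -/
theorem statement5 (V : Type) [Fintype V] (G : SimpleGraph V) (lam k : ℕ)
    (hk : 4 ≤ k)
    (hconn : IsEdgeConn G lam)
    (X : ZMod k → Finset V)
    (hne : ∀ i, (X i).Nonempty)
    (hpart : ∀ v : V, ∃! i : ZMod k, v ∈ X i)
    (hruns : ∀ (i : ZMod k) (l : ℕ), 1 ≤ l → l < k →
      cutSize G ((Finset.range l).sup fun t => X (i + (t : ZMod k))) = lam) :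
    (∀ i : ZMod k, 2 * crossCount G (X i) (X (i + 1)) = lam) ∧
    (∀ i j : ZMod k, i ≠ j → j ≠ i + 1 → j ≠ i - 1 →
      crossCount G (X i) (X j) = 0) := by
  haveI : NeZero k := ⟨by omega⟩
  set R : ZMod k → ℕ → Finset V :=
    fun i l => (Finset.range l).sup fun t => X (i + (t : ZMod k)) with hRdef
  have hdisj : ∀ i j : ZMod k, i ≠ j → Disjoint (X i) (X j) := by
    intro i j hij
    rw [Finset.disjoint_left]
    intro v hvi hvj
    obtain ⟨w, -, hu⟩ := hpart v
    exact hij ((hu i hvi).trans (hu j hvj).symm)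
  have hsingle : ∀ i, cutSize G (X i) = lam := by
    intro i
    have h := hruns i 1 le_rfl (by omega)
    simpa using h
  have hidx : ∀ (t l : ℕ), t < l → l < k → ∀ i : ZMod k,
      i + (t : ZMod k) ≠ i + (l : ZMod k) := by
    intro t l ht hl i h
    have h2 := add_left_cancel h
    have ht' : ((t : ZMod k)).val = t := ZMod.val_cast_of_lt (by omega)
    have hl' : ((l : ZMod k)).val = l := ZMod.val_cast_of_lt hl
    rw [h2] at ht'
    omega
  have hRdisjX : ∀ (i : ZMod k) (l : ℕ), l < k →
      Disjoint (R i l) (X (i + (l : ZMod k))) := by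
    intro i l hl
    rw [Finset.disjoint_left]
    intro v hv hv'
    obtain ⟨t, ht, hvt⟩ := Finset.mem_sup.mp hv
    rw [Finset.mem_range] at ht
    exact Finset.disjoint_left.mp (hdisj _ _ (hidx t l ht hl i)) hvt hv'
  have hRsucc : ∀ (i : ZMod k) (l : ℕ),
      R i (l + 1) = R i l ∪ X (i + (l : ZMod k)) := by
    intro i l
    show (Finset.range (l+1)).sup _ = _
    rw [Finset.range_add_one, Finset.sup_insert, Finset.sup_eq_union, Finset.union_comm]
  have hcross_run : ∀ (i : ZMod k) (Y : Finset V) (l : ℕ), l ≤ k →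
      crossCount G (R i l) Y =
        ∑ t ∈ Finset.range l, crossCount G (X (i + (t : ZMod k))) Y := by
    intro i Y l
    induction l with
    | zero => intro _; simpa [hRdef] using crossCount_empty_left G Y
    | succ l ih =>
      intro hl
      rw [hRsucc, crossCount_union_left G _ _ _ (hRdisjX i l (by omega)),
        Finset.sum_range_succ, ih (by omega)]
  have hstep : ∀ (i : ZMod k) (l : ℕ), 1 ≤ l → l + 1 < k →
      2 * crossCount G (R i l) (X (i + (l : ZMod k))) = lam := by
    intro i l hl1 hl2
    have key := cutSize_union G (R i l) (X (i + (l : ZMod k))) (hRdisjX i l (by omega))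
    rw [← hRsucc] at key
    have e1 : cutSize G (R i l) = lam := hruns i l hl1 (by omega)
    have e2 : cutSize G (R i (l + 1)) = lam := hruns i (l + 1) (by omega) hl2
    rw [e1, e2, hsingle] at key
    omega
  have hadj : ∀ i : ZMod k, 2 * crossCount G (X i) (X (i + 1)) = lam := by
    intro i
    have h := hstep i 1 le_rfl (by omega)
    have eR : R i 1 = X i := by
      show (Finset.range 1).sup _ = X i
      simp
    rw [eR] at h
    simpa using h
  refine ⟨hadj, ?_⟩
  intro i j hij hij1 hij2
  set l := (j - i).val with hl
  have hlk : l < k := ZMod.val_lt _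
  have hcast : ((l : ℕ) : ZMod k) = j - i := by
    rw [hl]; simp [ZMod.natCast_val, ZMod.cast_id]
  have hj : i + (l : ZMod k) = j := by rw [hcast]; ring
  have hl0 : l ≠ 0 := by
    intro h0
    apply hij
    have h1 : j - i = 0 := by rw [← hcast, h0]; simp
    exact (sub_eq_zero.mp h1).symm
  have hl1 : l ≠ 1 := by
    intro h1
    apply hij1
    have h2 : j - i = 1 := by rw [← hcast, h1]; simp
    have := sub_eq_iff_eq_add.mp h2
    rw [this]; ring
  have hlk1 : l ≠ k - 1 := by
    intro h1
    apply hij2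
    have h2 : j - i = -1 := by
      rw [← hcast, h1]
      push_cast [Nat.cast_sub (by omega : 1 ≤ k)]
      simp
    have := sub_eq_iff_eq_add.mp h2
    rw [this]; ring
  have hsum := hstep i l (by omega) (by omega)
  rw [hcross_run i _ l (le_of_lt hlk)] at hsum
  have hrange : Finset.range l = Finset.range ((l - 1) + 1) := by
    congr 1; omega
  rw [hrange, Finset.sum_range_succ] at hsum
  have e2 : ((l - 1 : ℕ) : ZMod k) + 1 = (l : ZMod k) := by
    push_cast [Nat.cast_sub (by omega : 1 ≤ l)]
    ring
  have hlast : 2 * crossCount G (X (i + ((l - 1 : ℕ) : ZMod k)))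
      (X (i + (l : ZMod k))) = lam := by
    have h := hadj (i + ((l - 1 : ℕ) : ZMod k))
    rwa [add_assoc, e2] at h
  have hzero : ∑ t ∈ Finset.range (l - 1),
      crossCount G (X (i + (t : ZMod k))) (X (i + (l : ZMod k))) = 0 := by
    omega
  have h0 : crossCount G (X (i + ((0 : ℕ) : ZMod k))) (X (i + (l : ZMod k))) = 0 :=
    Finset.sum_eq_zero_iff.mp hzero 0 (Finset.mem_range.mpr (by omega))
  rw [hj] at h0
  simpa using h0
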